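/- In a semilattice with its algebraic convexity, a subset is free (convex and every element is an extreme point of it) if and only if it is a chain; consequently the clique number (supremum of cardinalities of maximal free sets) equals the depth. -/
import Mathlib


def IsSubsemilattice {α : Type*} [SemilatticeSup α] (T : Set α) : Prop :=
  ∀ ⦃x⦄, x ∈ T → ∀ ⦃y⦄, y ∈ T → x ⊔ y ∈ T

def semilatticeHull {α : Type*} [SemilatticeSup α] (A : Set α) : Set α :=
  ⋂₀ {T | IsSubsemilattice T ∧ A ⊆ T}

/-- A subset of a semilattice is free (convex and independent). -/
def IsFree {α : Type*} [SemilatticeSup α] (K : Set α) : Prop :=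
  IsSubsemilattice K ∧ ∀ x ∈ K, x ∉ semilatticeHull (K \ {x})

lemma chain_isSubsemilattice {α : Type*} [SemilatticeSup α] {K : Set α}
    (h : IsChain (· ≤ ·) K) : IsSubsemilattice K := by
  intro x hx y hy
  rcases eq_or_ne x y with rfl | hne
  · simpa using hx
  · rcases h hx hy hne with hle | hle
    · simpa [sup_eq_right.mpr hle] using hy
    · simpa [sup_eq_left.mpr hle] using hx

lemma free_iff_chain {S : Type*} [SemilatticeSup S] (K : Set S) :
    IsFree K ↔ IsChain (· ≤ ·) K := by
  constructor
  · rintro ⟨hsub, hind⟩ x hx y hy hne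
    by_contra hcon
    push_neg at hcon
    obtain ⟨hxy, hyx⟩ := hcon
    have hz : x ⊔ y ∈ K := hsub hx hy
    have hzx : x ⊔ y ≠ x := fun h => hyx (h ▸ le_sup_right)
    have hzy : x ⊔ y ≠ y := fun h => hxy (h ▸ le_sup_left)
    refine hind _ hz ?_
    intro T hT
    exact hT.1 (hT.2 ⟨hx, hzx ∘ Eq.symm⟩) (hT.2 ⟨hy, hzy ∘ Eq.symm⟩)
  · intro hchain
    refine ⟨chain_isSubsemilattice hchain, fun x hx hmem => ?_⟩
    have : x ∈ K \ {x} := hmem (K \ {x})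
      ⟨chain_isSubsemilattice (hchain.mono Set.diff_subset), subset_rfl⟩
    exact this.2 rfl

theorem free_iff_chain_and_clique_eq_depth {S : Type*} [SemilatticeSup S] :
    (∀ K : Set S, IsFree K ↔ IsChain (· ≤ ·) K) ∧
    ∀ c : Cardinal,
      (∀ K : Set S, IsFree K → (∀ K' : Set S, IsFree K' → K ⊆ K' → K = K') →
        Cardinal.mk K ≤ c) ↔
      (∀ C : Set S, IsChain (· ≤ ·) C → Cardinal.mk C ≤ c) := by
  refine ⟨free_iff_chain, fun c => ⟨fun h C hC => ?_, fun h K hK _ => h K ((free_iff_chain K).mp hK)⟩⟩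
  obtain ⟨M, hM, hCM⟩ := hC.exists_maxChain
  have hMc : Cardinal.mk M ≤ c := by
    refine h M ((free_iff_chain M).mpr hM.1) fun K' hK' hMK' => ?_
    exact hM.2 ((free_iff_chain K').mp hK') hMK'
  exact le_trans (Cardinal.mk_le_mk_of_subset hCM) hMc
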